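/- arXiv:1912.10439 — 4 statements merged into one kernel-verified Lean document; each statement's English description precedes it below -/
import Mathlib

section
/- Let α be an a-cone arc in a rectifiably connected noncomplete metric space D with endpoints x and y, and let z₀ bisect the arclength of α. Then for all points z₁, z₂ ∈ α[x, z₀] with z₂ ∈ α[z₁, z₀] (i.e., z₂ between z₁ and z₀ along α), we have k_D(z₁, z₂) ≤ ℓ_{k_D}(α[z₁,z₂]) ≤ 2a·log(1 + 2ℓ(α[z₁,z₂])/d_D(z₁)). -/
open Set Metric

noncomputable section

variable {D : Type*} [MetricSpace D]

/-- Distance from a point to the metric boundary `∂D = D̄ \ D`. -/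
def dB (x : D) : ℝ :=
  Metric.infDist (x : UniformSpace.Completion D)
    ((Set.range ((↑) : D → UniformSpace.Completion D))ᶜ)

/-- A rectifiable curve from `x` to `y`, given in (1-Lipschitz) arclength
parametrization on `[0, L]`; `L` is its length. -/
structure Curve (D : Type*) [MetricSpace D] (x y : D) where
  L : ℝ
  hL : 0 ≤ L
  γ : ℝ → D
  lip : LipschitzOnWith 1 γ (Set.Icc 0 L)
  h0 : γ 0 = x
  h1 : γ L = y

/-- Quasihyperbolic length of the subarc with parameters in `[s,t]`. -/
def Curve.qhLenOn {x y : D} (c : Curve D x y) (s t : ℝ) : ℝ :=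
  ∫ u in s..t, 1 / dB (c.γ u)

/-- Quasihyperbolic length of a curve. -/
def Curve.qhLen {x y : D} (c : Curve D x y) : ℝ := c.qhLenOn 0 c.L

/-- The quasihyperbolic distance: infimum of quasihyperbolic lengths of curves. -/
def qhDist (x y : D) : ℝ := sInf {r : ℝ | ∃ c : Curve D x y, r = c.qhLen}

/-- Every pair of points is joined by a rectifiable curve. -/
def RectConnected (D : Type*) [MetricSpace D] : Prop :=
  ∀ x y : D, Nonempty (Curve D x y)

/-- A length space: distance is the infimum of lengths of joining curves. -/
def IsLengthSpace (D : Type*) [MetricSpace D] : Prop :=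
  ∀ x y : D, ∀ ε > 0, ∃ c : Curve D x y, c.L ≤ dist x y + ε

/-- A quasihyperbolic geodesic. -/
def Curve.IsQHGeodesic {x y : D} (c : Curve D x y) : Prop :=
  ∀ s t : ℝ, s ∈ Set.Icc 0 c.L → t ∈ Set.Icc 0 c.L → s ≤ t →
    c.qhLenOn s t = qhDist (c.γ s) (c.γ t)

/-- An `a`-cone arc: `min{ℓ(α[x,z]), ℓ(α[z,y])} ≤ a·d_D(z)` for all `z` on the arc. -/
def Curve.IsConeArc {x y : D} (c : Curve D x y) (a : ℝ) : Prop :=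
  ∀ t ∈ Set.Icc 0 c.L, min t (c.L - t) ≤ a * dB (c.γ t)

/-- A `(λ,μ)`-quasigeodesic with respect to the quasihyperbolic metric. -/
def Curve.IsQuasigeodesic {x y : D} (c : Curve D x y) (lam mu : ℝ) : Prop :=
  ∀ s t : ℝ, s ∈ Set.Icc 0 c.L → t ∈ Set.Icc 0 c.L → s ≤ t →
    c.qhLenOn s t ≤ lam * qhDist (c.γ s) (c.γ t) + mu

/-- An `a`-John space. -/
def IsJohn (D : Type*) [MetricSpace D] (a : ℝ) : Prop :=
  ∀ x y : D, ∃ c : Curve D x y, c.IsConeArc a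

/-- A `c`-uniform space. -/
def IsUniform (D : Type*) [MetricSpace D] (c : ℝ) : Prop :=
  ∀ x y : D, ∃ α : Curve D x y, α.L ≤ c * dist x y ∧ α.IsConeArc c

/-- Gromov product with respect to the quasihyperbolic metric. -/
def gromovProd (x y w : D) : ℝ := (qhDist x w + qhDist y w - qhDist x y) / 2

/-- `(D,k)` is Gromov `δ`-hyperbolic (four-point condition). -/
def QHHyperbolic (D : Type*) [MetricSpace D] (δ : ℝ) : Prop :=
  ∀ x y z w : D, min (gromovProd x y w) (gromovProd y z w) - δ ≤ gromovProd x z w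

/-- `(D,k)` is `K`-roughly starlike with respect to `w`. -/
def RoughlyStarlike (D : Type*) [MetricSpace D] (K : ℝ) (w : D) : Prop :=
  ∀ x : D, ∃ γ : ℝ → D, γ 0 = w ∧
    (∀ s t : ℝ, 0 ≤ s → 0 ≤ t → qhDist (γ s) (γ t) = |s - t|) ∧
    ∃ t : ℝ, 0 ≤ t ∧ qhDist x (γ t) ≤ K

/-- The `h`-coarse quasihyperbolic length of the part of the curve `β` with
parameters in `[s,t]`. -/
def coarseLen {E : Type*} [MetricSpace E] (β : ℝ → E) (s t h : ℝ) : ℝ :=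
  sSup {r : ℝ | ∃ n : ℕ, ∃ u : Fin (n + 1) → ℝ, Monotone u ∧
    (∀ i, u i ∈ Set.Icc s t) ∧
    (∀ i : Fin n, h ≤ qhDist (β (u i.castSucc)) (β (u i.succ))) ∧
    r = ∑ i : Fin n, qhDist (β (u i.castSucc)) (β (u i.succ))}

/-- `λ`-annular quasiconvexity. -/
def AnnularQuasiconvex (X : Type*) [MetricSpace X] (lam : ℝ) : Prop :=
  ∀ (x : X) (r r' : ℝ), 0 < r' → r' < r →
    ∀ y z : X, y ∈ Metric.ball x r \ Metric.ball x r' →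
      z ∈ Metric.ball x r \ Metric.ball x r' →
      ∃ c : Curve X y z, c.L ≤ lam * dist y z ∧
        ∀ t ∈ Set.Icc 0 c.L, c.γ t ∈ Metric.ball x (lam * r) \ Metric.ball x (r' / lam)

end

noncomputable section Aux

variable {D : Type*} [MetricSpace D]

lemma dB_nonneg (p : D) : 0 ≤ dB p := Metric.infDist_nonneg

lemma dB_lipschitz : LipschitzWith 1 (dB : D → ℝ) := by
  have h := (Metric.lipschitz_infDist_pt
      ((Set.range ((↑) : D → UniformSpace.Completion D))ᶜ)).comp
      (UniformSpace.Completion.coe_isometry (α := D)).lipschitz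
  simp only [mul_one] at h
  exact h

lemma dB_le_add (p q : D) : dB p ≤ dB q + dist p q := by
  have h := dB_lipschitz.dist_le_mul p q
  rw [NNReal.coe_one, one_mul, Real.dist_eq] at h
  have h2 := (abs_le.mp h).2
  linarith

lemma Curve.qhLen_nonneg {x y : D} (c : Curve D x y) : 0 ≤ c.qhLen :=
  intervalIntegral.integral_nonneg c.hL fun u _ => one_div_nonneg.mpr (dB_nonneg _)

/-- Restriction of a curve to a parameter subinterval. -/
def Curve.restrict {x y : D} (c : Curve D x y) (s t : ℝ)
    (h0 : 0 ≤ s) (hst : s ≤ t) (hL : t ≤ c.L) : Curve D (c.γ s) (c.γ t) where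
  L := t - s
  hL := by linarith
  γ := fun u => c.γ (s + u)
  lip := by
    have hshift : LipschitzOnWith 1 (fun u : ℝ => s + u) (Set.Icc 0 (t - s)) :=
      LipschitzWith.lipschitzOnWith (by
        refine LipschitzWith.of_dist_le_mul fun u v => ?_
        simp [Real.dist_eq, add_sub_add_left_eq_sub])
    have hmaps : Set.MapsTo (fun u : ℝ => s + u) (Set.Icc 0 (t - s)) (Set.Icc 0 c.L) := by
      intro u hu
      simp only [Set.mem_Icc] at hu ⊢
      constructor <;> linarith [hu.1, hu.2]
    have h := c.lip.comp hshift hmaps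
    simp only [mul_one] at h
    exact h
  h0 := by simp
  h1 := by simp

lemma Curve.restrict_qhLen {x y : D} (c : Curve D x y) (s t : ℝ)
    (h0 : 0 ≤ s) (hst : s ≤ t) (hL : t ≤ c.L) :
    (c.restrict s t h0 hst hL).qhLen = c.qhLenOn s t := by
  show (∫ u in (0:ℝ)..(t - s), 1 / dB (c.γ (s + u))) = ∫ u in s..t, 1 / dB (c.γ u)
  rw [intervalIntegral.integral_comp_add_left (fun u => 1 / dB (c.γ u)) s]
  norm_num

open intervalIntegral in
lemma integral_inv' {a b : ℝ} (h : (0:ℝ) ∉ Set.uIcc a b) :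
    ∫ x in a..b, x⁻¹ = Real.log (b / a) := integral_inv h

lemma qhDist_le_qhLen {x y : D} (c : Curve D x y) : qhDist x y ≤ c.qhLen := by
  apply csInf_le
  · exact ⟨0, fun r hr => by obtain ⟨c', rfl⟩ := hr; exact c'.qhLen_nonneg⟩
  · exact ⟨c, rfl⟩

end Aux

set_option maxHeartbeats 1600000 in
/-- on the first half of an `a`-cone arc,
`k_D(z₁,z₂) ≤ ℓ_{k_D}(α[z₁,z₂]) ≤ 2a·log(1 + 2ℓ(α[z₁,z₂])/d_D(z₁))`. -/
theorem stmt4 {D : Type*} [MetricSpace D]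
    (hrc : RectConnected D) (hnc : ¬ CompleteSpace D)
    (a : ℝ) (ha : 1 ≤ a) (x y : D) (α : Curve D x y) (hcone : α.IsConeArc a)
    (s t : ℝ) (hs : s ∈ Set.Icc 0 (α.L / 2)) (ht : t ∈ Set.Icc s (α.L / 2)) :
    qhDist (α.γ s) (α.γ t) ≤ α.qhLenOn s t ∧
      α.qhLenOn s t ≤ 2 * a * Real.log (1 + 2 * (t - s) / dB (α.γ s)) := by
  obtain ⟨hs0, hsL⟩ := hs
  obtain ⟨hst, htL⟩ := ht
  have hL0 : 0 ≤ α.L := α.hL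
  have hsL' : s ≤ α.L := by linarith
  have htL' : t ≤ α.L := by linarith
  have ha0 : (0:ℝ) < a := by linarith
  have hd0 : 0 ≤ dB (α.γ s) := dB_nonneg _
  -- cone lower bound: u/a ≤ dB (γ u) for u ∈ [s,t]
  have key1 : ∀ u ∈ Set.Icc s t, u / a ≤ dB (α.γ u) := by
    intro u hu
    have hu0 : 0 ≤ u := le_trans hs0 hu.1
    have huL : u ≤ α.L := by linarith [hu.2]
    have h := hcone u ⟨hu0, huL⟩
    rw [min_eq_left (by linarith [hu.2])] at h
    rw [div_le_iff₀ ha0]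
    linarith [h]
  -- Lipschitz lower bound: d - (u - s) ≤ dB (γ u)
  have hlipd : ∀ u v : ℝ, 0 ≤ u → u ≤ v → v ≤ α.L →
      dist (α.γ u) (α.γ v) ≤ v - u := by
    intro u v hu huv hv
    have h := α.lip.dist_le_mul u ⟨hu, by linarith⟩ v ⟨by linarith, hv⟩
    rw [NNReal.coe_one, one_mul, Real.dist_eq, abs_of_nonpos (by linarith)] at h
    linarith
  have key2 : ∀ u ∈ Set.Icc s t, dB (α.γ s) - (u - s) ≤ dB (α.γ u) := by
    intro u hu
    have h1 : dB (α.γ s) ≤ dB (α.γ u) + dist (α.γ s) (α.γ u) := dB_le_add _ _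
    have h2 : dist (α.γ s) (α.γ u) ≤ u - s :=
      hlipd s u hs0 hu.1 (by linarith [hu.2])
    linarith
  -- Part 1
  have part1 : qhDist (α.γ s) (α.γ t) ≤ α.qhLenOn s t := by
    have h := qhDist_le_qhLen (α.restrict s t hs0 hst htL')
    rwa [α.restrict_qhLen s t hs0 hst htL'] at h
  refine ⟨part1, ?_⟩
  by_cases hdpos : 0 < dB (α.γ s)
  · -- main case: d > 0
    set d := dB (α.γ s) with hd
    have hfrac0 : 0 ≤ 2 * (t - s) / d := div_nonneg (by linarith) hd0
    have hXpos : (0:ℝ) < 1 + 2 * (t - s) / d := by linarith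
    have hlogX : 0 ≤ Real.log (1 + 2 * (t - s) / d) := Real.log_nonneg (by linarith)
    have hXeq : (d + 2 * (t - s)) / d = 1 + 2 * (t - s) / d := by
      field_simp
    -- uniform positive lower bound on dB along [s,t]
    have hpos : ∀ u ∈ Set.Icc s t, d / (a + 1) ≤ dB (α.γ u) := by
      intro u hu
      rcases le_or_gt (d / (a + 1)) (u / a) with h | h
      · exact h.trans (key1 u hu)
      · have hu' : u < a * (d / (a + 1)) := by
          rw [div_lt_iff₀ ha0] at h; linarith [h]
        have had : a * (d / (a + 1)) = d - d / (a + 1) := by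
          field_simp; ring
        have : d / (a + 1) ≤ d - (u - s) := by
          rw [had] at hu'
          have hus : u - s ≤ u := by linarith [hu.1, hs0]
          linarith
        exact this.trans (key2 u hu)
    have hposd : (0:ℝ) < d / (a + 1) := by positivity
    -- continuity and integrability of the integrand on [s,t]
    have hcont : ContinuousOn (fun u => dB (α.γ u)) (Set.Icc 0 α.L) := by
      have h : LipschitzOnWith 1 ((dB : D → ℝ) ∘ α.γ) (Set.Icc 0 α.L) := by
        simpa using (dB_lipschitz.lipschitzOnWith (s := Set.univ)).comp α.lip
          (Set.mapsTo_univ _ _)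
      exact h.continuousOn
    have hcontst : ContinuousOn (fun u => 1 / dB (α.γ u)) (Set.Icc s t) := by
      apply ContinuousOn.div continuousOn_const
        (hcont.mono (fun u hu => ⟨le_trans hs0 hu.1, by linarith [hu.2, htL']⟩))
      intro u hu
      exact ne_of_gt (lt_of_lt_of_le hposd (hpos u hu))
    have hint : IntervalIntegrable (fun u => 1 / dB (α.γ u)) MeasureTheory.volume s t := by
      apply ContinuousOn.intervalIntegrable
      rwa [Set.uIcc_of_le hst]
    rcases le_or_gt (t - s) (d / 2) with hcase | hcase
    · -- short subarc: compare with 1/((d+s)-u)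
      have hdt : 0 < d + s - t := by linarith
      have hgpos : ∀ u ∈ Set.Icc s t, (0:ℝ) < d + s - u := fun u hu => by
        linarith [hu.2]
      have hgint : IntervalIntegrable (fun u : ℝ => (d + s - u)⁻¹)
          MeasureTheory.volume s t := by
        apply ContinuousOn.intervalIntegrable
        rw [Set.uIcc_of_le hst]
        exact ContinuousOn.inv₀ (by fun_prop) fun u hu => ne_of_gt (hgpos u hu)
      have hmono : α.qhLenOn s t ≤ ∫ u in s..t, (d + s - u)⁻¹ := by
        apply intervalIntegral.integral_mono_on hst hint hgint
        intro u hu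
        rw [one_div]
        exact inv_anti₀ (hgpos u hu) (by linarith [key2 u hu])
      have hval : (∫ u in s..t, (d + s - u)⁻¹) = Real.log (d / (d + s - t)) := by
        rw [show (fun u : ℝ => (d + s - u)⁻¹)
            = fun u : ℝ => (fun w : ℝ => w⁻¹) ((d + s) - u) from rfl]
        rw [intervalIntegral.integral_comp_sub_left (fun w : ℝ => w⁻¹) (d + s)]
        rw [integral_inv']
        · congr 1
          ring_nf
        · rw [Set.uIcc_of_le (by linarith : d + s - t ≤ d + s - s), Set.mem_Icc]
          push_neg
          intro h'
          linarith
      have harg : d / (d + s - t) ≤ ((d + 2 * (t - s)) / d) ^ 2 := by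
        rw [div_pow, div_le_div_iff₀ hdt (by positivity)]
        have h3 : (0:ℝ) ≤ 3 * d ^ 2 - 4 * (t - s) ^ 2 := by nlinarith
        nlinarith [mul_nonneg (sub_nonneg.mpr hst) h3]
      have hlog1 : Real.log (d / (d + s - t)) ≤ 2 * Real.log (1 + 2 * (t - s) / d) := by
        have h2 := Real.log_le_log (by positivity) harg
        rw [Real.log_pow, hXeq] at h2
        push_cast at h2
        linarith
      calc α.qhLenOn s t ≤ ∫ u in s..t, (d + s - u)⁻¹ := hmono
        _ = Real.log (d / (d + s - t)) := hval
        _ ≤ 2 * Real.log (1 + 2 * (t - s) / d) := hlog1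
        _ ≤ 2 * a * Real.log (1 + 2 * (t - s) / d) := by
            nlinarith [mul_nonneg (sub_nonneg.mpr ha) hlogX]
    · -- long subarc: split at m = s + d/2
      set m := s + d / 2 with hm
      have hm0 : 0 < m := by simp only [hm]; linarith
      have hsm : s ≤ m := by simp only [hm]; linarith
      have hmt : m ≤ t := by simp only [hm]; linarith
      have hsub1 : Set.uIcc s m ⊆ Set.uIcc s t := by
        rw [Set.uIcc_of_le hsm, Set.uIcc_of_le hst]
        exact Set.Icc_subset_Icc le_rfl hmt
      have hsub2 : Set.uIcc m t ⊆ Set.uIcc s t := by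
        rw [Set.uIcc_of_le hmt, Set.uIcc_of_le hst]
        exact Set.Icc_subset_Icc hsm le_rfl
      have hint1 := hint.mono_set hsub1
      have hint2 := hint.mono_set hsub2
      have hsplit : α.qhLenOn s t
          = (∫ u in s..m, 1 / dB (α.γ u)) + ∫ u in m..t, 1 / dB (α.γ u) :=
        (intervalIntegral.integral_add_adjacent_intervals hint1 hint2).symm
      -- first piece ≤ log 2
      have hb1 : (∫ u in s..m, 1 / dB (α.γ u)) ≤ Real.log 2 := by
        have hgpos : ∀ u ∈ Set.Icc s m, (0:ℝ) < d + s - u := fun u hu => by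
          have := hu.2
          simp only [hm] at this
          linarith
        have hgint : IntervalIntegrable (fun u : ℝ => (d + s - u)⁻¹)
            MeasureTheory.volume s m := by
          apply ContinuousOn.intervalIntegrable
          rw [Set.uIcc_of_le hsm]
          exact ContinuousOn.inv₀ (by fun_prop) fun u hu => ne_of_gt (hgpos u hu)
        have hmono1 : (∫ u in s..m, 1 / dB (α.γ u)) ≤ ∫ u in s..m, (d + s - u)⁻¹ := by
          apply intervalIntegral.integral_mono_on hsm hint1 hgint
          intro u hu
          rw [one_div]
          refine inv_anti₀ (hgpos u hu) ?_
          have := key2 u ⟨hu.1, le_trans hu.2 hmt⟩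
          linarith
        have hval1 : (∫ u in s..m, (d + s - u)⁻¹) = Real.log 2 := by
          rw [show (fun u : ℝ => (d + s - u)⁻¹)
              = fun u : ℝ => (fun w : ℝ => w⁻¹) ((d + s) - u) from rfl]
          rw [intervalIntegral.integral_comp_sub_left (fun w : ℝ => w⁻¹) (d + s)]
          rw [integral_inv']
          · congr 1
            simp only [hm]
            rw [show d + s - (s + d / 2) = d / 2 by ring, show d + s - s = d by ring]
            rw [div_div_eq_mul_div]
            field_simp
          · rw [Set.uIcc_of_le (by simp only [hm]; linarith : d + s - m ≤ d + s - s),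
              Set.mem_Icc]
            push_neg
            intro h'
            simp only [hm] at h' ⊢
            linarith
        linarith
      -- second piece ≤ a * log (t / m)
      have hb2 : (∫ u in m..t, 1 / dB (α.γ u)) ≤ a * Real.log (t / m) := by
        have hgint : IntervalIntegrable (fun u : ℝ => a * u⁻¹)
            MeasureTheory.volume m t := by
          apply ContinuousOn.intervalIntegrable
          rw [Set.uIcc_of_le hmt]
          exact ContinuousOn.mul continuousOn_const
            (ContinuousOn.inv₀ (by fun_prop) fun u hu => ne_of_gt (lt_of_lt_of_le hm0 hu.1))
        have hmono2 : (∫ u in m..t, 1 / dB (α.γ u)) ≤ ∫ u in m..t, a * u⁻¹ := by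
          apply intervalIntegral.integral_mono_on hmt hint2 hgint
          intro u hu
          have hu0 : 0 < u := lt_of_lt_of_le hm0 hu.1
          have hk := key1 u ⟨le_trans hsm hu.1, hu.2⟩
          have h1 : 1 / dB (α.γ u) ≤ 1 / (u / a) := by
            rw [one_div, one_div]
            exact inv_anti₀ (div_pos hu0 ha0) hk
          rw [one_div_div] at h1
          rw [div_eq_mul_inv] at h1
          exact h1
        have hval2 : (∫ u in m..t, a * u⁻¹) = a * Real.log (t / m) := by
          rw [intervalIntegral.integral_const_mul, integral_inv']
          rw [Set.uIcc_of_le hmt, Set.mem_Icc]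
          push_neg
          intro h'
          linarith
        linarith
      -- conclude
      have hfrac1 : (1:ℝ) ≤ 2 * (t - s) / d := by
        rw [le_div_iff₀ hdpos]; linarith
      have hlog2 : Real.log 2 ≤ a * Real.log (1 + 2 * (t - s) / d) := by
        have h1 : Real.log 2 ≤ Real.log (1 + 2 * (t - s) / d) :=
          Real.log_le_log (by norm_num) (by linarith)
        nlinarith [Real.log_nonneg (show (1:ℝ) ≤ 2 by norm_num)]
      have htm : t / m ≤ 1 + 2 * (t - s) / d := by
        rw [← hXeq, div_le_div_iff₀ hm0 hdpos]
        simp only [hm]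
        nlinarith [mul_nonneg hs0 (by linarith : (0:ℝ) ≤ t - s)]
      have hlog3 : a * Real.log (t / m) ≤ a * Real.log (1 + 2 * (t - s) / d) := by
        apply mul_le_mul_of_nonneg_left _ ha0.le
        exact Real.log_le_log (div_pos (lt_of_lt_of_le hm0 hmt) hm0) htm
      rw [hsplit]
      linarith
  · -- degenerate case: dB (γ s) = 0
    have hdz : dB (α.γ s) = 0 := le_antisymm (not_lt.mp hdpos) hd0
    have hsz : s = 0 := by
      have h := hcone s ⟨hs0, hsL'⟩
      rw [min_eq_left (by linarith)] at h
      rw [hdz, mul_zero] at h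
      linarith
    subst hsz
    rcases eq_or_lt_of_le hst with ht0 | ht0
    · rw [← ht0]
      show (∫ u in (0:ℝ)..(0:ℝ), 1 / dB (α.γ u)) ≤ _
      rw [intervalIntegral.integral_same]
      simp [hdz]
    · have htpos : (0:ℝ) < t := ht0
      have hnint : ¬ IntervalIntegrable (fun u => 1 / dB (α.γ u))
          MeasureTheory.volume 0 t := by
        intro hI
        have hIoc : MeasureTheory.IntegrableOn (fun u => 1 / dB (α.γ u)) (Set.Ioc 0 t) :=
          (intervalIntegrable_iff_integrableOn_Ioc_of_le htpos.le).mp hI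
        have hinv : MeasureTheory.IntegrableOn (fun u : ℝ => u⁻¹) (Set.Ioc 0 t) := by
          apply hIoc.mono' measurable_inv.aestronglyMeasurable
          filter_upwards [MeasureTheory.ae_restrict_mem measurableSet_Ioc] with u hu
          have hu0 : 0 < u := hu.1
          have hk := key1 u ⟨hu0.le, hu.2⟩
          have hdbpos : 0 < dB (α.γ u) := lt_of_lt_of_le (div_pos hu0 ha0) hk
          have hub : dB (α.γ u) ≤ u := by
            have h1 : dB (α.γ u) ≤ dB (α.γ 0) + dist (α.γ u) (α.γ 0) := dB_le_add _ _
            have h2 : dist (α.γ 0) (α.γ u) ≤ u - 0 :=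
              hlipd 0 u le_rfl hu0.le (by linarith [hu.2])
            rw [dist_comm] at h2
            rw [hdz] at h1
            linarith
          rw [Real.norm_eq_abs, abs_of_nonneg (inv_nonneg.mpr hu0.le), one_div]
          exact inv_anti₀ hdbpos hub
        have hII : IntervalIntegrable (fun u : ℝ => u⁻¹) MeasureTheory.volume 0 t :=
          (intervalIntegrable_iff_integrableOn_Ioc_of_le htpos.le).mpr hinv
        rw [intervalIntegrable_inv_iff] at hII
        rcases hII with h | h
        · linarith
        · exact h (by rw [Set.uIcc_of_le htpos.le]; exact ⟨le_rfl, htpos.le⟩)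
      show (∫ u in (0:ℝ)..t, 1 / dB (α.γ u)) ≤ _
      rw [intervalIntegral.integral_undef hnint]
      simp [hdz]
end

section
/- Let α be an a-cone arc in a noncomplete metric space D with endpoints x and y, let z₀ bisect the arclength of α, and let z₁, z₂ ∈ α[x,z₀] with z₂ between z₁ and z₀. Then d_D(z₂) ≥ (1/(4a))·(2ℓ(α[z₁,z₂]) + d_D(z₁)). -/
open Set Metric

/-- on the first half of an `a`-cone arc,
`d_D(z₂) ≥ (1/(4a))(2ℓ(α[z₁,z₂]) + d_D(z₁))`. -/
theorem stmt6 {D : Type*} [MetricSpace D] (hnc : ¬ CompleteSpace D)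
    (a : ℝ) (ha : 1 ≤ a) (x y : D) (α : Curve D x y) (hcone : α.IsConeArc a)
    (s t : ℝ) (hs : s ∈ Set.Icc 0 (α.L / 2)) (ht : t ∈ Set.Icc s (α.L / 2)) :
    1 / (4 * a) * (2 * (t - s) + dB (α.γ s)) ≤ dB (α.γ t) := by
  obtain ⟨hs0, hsL2⟩ := hs
  obtain ⟨hst, htL2⟩ := ht
  have hLhalf : α.L / 2 ≤ α.L := by linarith [α.hL]
  have hsL : s ∈ Set.Icc 0 α.L := ⟨hs0, le_trans hsL2 hLhalf⟩
  have htL : t ∈ Set.Icc 0 α.L := ⟨le_trans hs0 hst, le_trans htL2 hLhalf⟩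
  have hd2nn : 0 ≤ dB (α.γ t) := Metric.infDist_nonneg
  -- distance between curve points
  have hdist : dist (α.γ s) (α.γ t) ≤ t - s := by
    have := α.lip.dist_le_mul s hsL t htL
    rwa [NNReal.coe_one, one_mul, Real.dist_eq, abs_of_nonpos (by linarith), neg_sub] at this
  -- dB is 1-Lipschitz
  have hlip : dB (α.γ s) ≤ dB (α.γ t) + (t - s) := by
    have h1 := Metric.infDist_le_infDist_add_dist (x := (α.γ s : UniformSpace.Completion D))
      (y := (α.γ t : UniformSpace.Completion D))
      (s := (Set.range ((↑) : D → UniformSpace.Completion D))ᶜ)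
    have h2 : dist ((α.γ s : UniformSpace.Completion D)) ((α.γ t : UniformSpace.Completion D))
        = dist (α.γ s) (α.γ t) := UniformSpace.Completion.dist_eq _ _
    unfold dB
    rw [h2] at h1
    linarith
  -- cone condition at t
  have hcone_t : t ≤ a * dB (α.γ t) := by
    have := hcone t htL
    rwa [min_eq_left (by linarith)] at this
  have ha4 : 0 < 4 * a := by linarith
  rw [div_mul_eq_mul_div, one_mul, div_le_iff₀ ha4]
  nlinarith [mul_nonneg (sub_nonneg.2 ha) hd2nn]
end

section
/- Let D be a c-uniform rectifiably connected noncomplete metric space. Then for all x, y ∈ D, k_D(x,y) ≤ 4c²·log(1 + d(x,y)/min{d_D(x), d_D(y)}). -/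
open Set Metric

section StmtAux

open MeasureTheory intervalIntegral


lemma my_le_two_log {s : ℝ} (h0 : 0 ≤ s) (h1 : s ≤ 1) : s ≤ 2 * Real.log (1 + s) := by
  have e1 : 1 - s / 2 ≤ Real.exp (-(s / 2)) := by
    have := Real.add_one_le_exp (-(s / 2)); linarith
  have e2 : Real.exp (s / 2) * (1 - s / 2) ≤ 1 := by
    calc Real.exp (s / 2) * (1 - s / 2) ≤ Real.exp (s / 2) * Real.exp (-(s / 2)) :=
          mul_le_mul_of_nonneg_left e1 (Real.exp_pos _).le
      _ = 1 := by rw [← Real.exp_add]; simp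
  have e3 : Real.exp (s / 2) ≤ 1 + s := by nlinarith [Real.exp_pos (s / 2)]
  have := (Real.le_log_iff_exp_le (by linarith : (0:ℝ) < 1 + s)).2 e3
  linarith

lemma my_log_le {c t : ℝ} (hc : 1 ≤ c) (ht : 0 ≤ t) :
    Real.log (2 * c * t) ≤ 2 * c * Real.log (1 + t) := by
  rcases eq_or_lt_of_le ht with h | h
  · simp [← h]
  · have hb : 1 + 2 * c * t ≤ (1 + t) ^ (2 * c) := by
      have := one_add_mul_self_le_rpow_one_add (by linarith : (-1:ℝ) ≤ t)
        (by linarith : (1:ℝ) ≤ 2 * c)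
      linarith
    have h1 : Real.log (2 * c * t) ≤ Real.log ((1 + t) ^ (2 * c)) := by
      apply Real.log_le_log (by positivity)
      linarith
    rwa [Real.log_rpow (by linarith : (0:ℝ) < 1 + t)] at h1

set_option maxHeartbeats 1000000 in
lemma my_half_bound {c dx L d m : ℝ} (hc : 1 ≤ c) (hdx : 0 < dx) (hm : 0 < m)
    (hmdx : m ≤ dx) (hd : 0 < d) (hdL : d ≤ L) (hLcd : L ≤ c * d)
    {g : ℝ → ℝ} (hgc : ContinuousOn g (Set.Icc 0 (L / 2)))
    (h1 : ∀ u ∈ Set.Icc 0 (L / 2), dx - u ≤ g u)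
    (h2 : ∀ u ∈ Set.Icc 0 (L / 2), u ≤ c * g u) :
    ∫ u in (0:ℝ)..(L / 2), 1 / g u ≤ 2 * c ^ 2 * Real.log (1 + d / m) := by
  have hc0 : 0 < c := by linarith
  have hL : 0 < L := lt_of_lt_of_le hd hdL
  have hL2 : (0:ℝ) ≤ L / 2 := by linarith
  have hgpos : ∀ u ∈ Set.Icc 0 (L / 2), 0 < g u := by
    intro u hu
    obtain ⟨hu0, hu2⟩ := hu
    rcases eq_or_lt_of_le hu0 with h | h
    · have := h1 u ⟨hu0, hu2⟩; rw [← h] at this ⊢; linarith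
    · have := h2 u ⟨hu0, hu2⟩; nlinarith
  have hfc : ContinuousOn (fun u => 1 / g u) (Set.Icc 0 (L / 2)) :=
    ContinuousOn.div continuousOn_const hgc (fun u hu => (hgpos u hu).ne')
  have hint : IntervalIntegrable (fun u => 1 / g u) volume 0 (L / 2) := by
    apply ContinuousOn.intervalIntegrable
    rwa [Set.uIcc_of_le hL2]
  have hddx : (0:ℝ) ≤ d / dx := by positivity
  have hlogm : Real.log (1 + d / dx) ≤ Real.log (1 + d / m) := by
    apply Real.log_le_log (by linarith)
    have : d / dx ≤ d / m := by gcongr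
    linarith
  have hlog0 : 0 ≤ Real.log (1 + d / dx) := Real.log_nonneg (by linarith)
  have hlogm0 : 0 ≤ Real.log (1 + d / m) := Real.log_nonneg
    (by have := div_pos hd hm; linarith)
  rcases le_or_gt L dx with hA | hB
  · -- Case A : L ≤ dx
    have hpt : ∀ u ∈ Set.Icc (0:ℝ) (L / 2), 1 / g u ≤ 2 / dx := by
      intro u hu
      obtain ⟨hu0, hu2⟩ := hu
      have hgu : dx / 2 ≤ g u := by have := h1 u ⟨hu0, hu2⟩; linarith
      calc 1 / g u ≤ 1 / (dx / 2) := one_div_le_one_div_of_le (by positivity) hgu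
        _ = 2 / dx := by rw [one_div_div]
    have hmono := intervalIntegral.integral_mono_on hL2 hint
      (intervalIntegrable_const (c := 2 / dx)) hpt
    rw [intervalIntegral.integral_const, smul_eq_mul] at hmono
    have hval : (L / 2 - 0) * (2 / dx) = L / dx := by field_simp; ring
    rw [hval] at hmono
    have hs1 : d / dx ≤ 1 := by rw [div_le_one hdx]; linarith
    have h2l := my_le_two_log hddx hs1
    have hLd : L / dx ≤ c * (d / dx) := by
      rw [← mul_div_assoc]; gcongr
    have step : c * (d / dx) ≤ c * (2 * Real.log (1 + d / dx)) :=
      mul_le_mul_of_nonneg_left h2l hc0.le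
    have q1 : 2 * c * Real.log (1 + d / dx) ≤ 2 * c * Real.log (1 + d / m) := by
      have := mul_le_mul_of_nonneg_left hlogm (by linarith : (0:ℝ) ≤ 2 * c)
      linarith
    have q2 : 2 * c * Real.log (1 + d / m) ≤ 2 * c ^ 2 * Real.log (1 + d / m) := by
      nlinarith [mul_nonneg (mul_nonneg (by linarith : (0:ℝ) ≤ c - 1) hc0.le) hlogm0]
    linarith
  · -- Case B : dx < L
    have hdx2 : dx / 2 ≤ L / 2 := by linarith
    have hdx20 : (0:ℝ) ≤ dx / 2 := by positivity
    have huIcc1 : Set.uIcc (0:ℝ) (dx / 2) ⊆ Set.uIcc (0:ℝ) (L / 2) := by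
      rw [Set.uIcc_of_le hdx20, Set.uIcc_of_le hL2]
      exact Set.Icc_subset_Icc le_rfl hdx2
    have huIcc2 : Set.uIcc (dx / 2) (L / 2) ⊆ Set.uIcc (0:ℝ) (L / 2) := by
      rw [Set.uIcc_of_le hdx2, Set.uIcc_of_le hL2]
      exact Set.Icc_subset_Icc hdx20 le_rfl
    have hint1 : IntervalIntegrable (fun u => 1 / g u) volume 0 (dx / 2) :=
      hint.mono_set huIcc1
    have hint2 : IntervalIntegrable (fun u => 1 / g u) volume (dx / 2) (L / 2) :=
      hint.mono_set huIcc2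
    have hsplit : (∫ u in (0:ℝ)..(dx / 2), 1 / g u) + ∫ u in (dx / 2)..(L / 2), 1 / g u
        = ∫ u in (0:ℝ)..(L / 2), 1 / g u :=
      intervalIntegral.integral_add_adjacent_intervals hint1 hint2
    -- piece 1
    have hint1' : IntervalIntegrable (fun u => 1 / (dx - u)) volume 0 (dx / 2) := by
      apply ContinuousOn.intervalIntegrable
      apply ContinuousOn.div continuousOn_const
        (continuousOn_const.sub continuousOn_id)
      intro u hu
      rw [Set.uIcc_of_le hdx20] at hu
      have := hu.2; intro hzero; simp only [Pi.sub_apply, id] at hzero ⊢; nlinarith [hu.1]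
    have hp1 : (∫ u in (0:ℝ)..(dx / 2), 1 / g u)
        ≤ ∫ u in (0:ℝ)..(dx / 2), 1 / (dx - u) := by
      apply intervalIntegral.integral_mono_on hdx20 hint1 hint1'
      intro u hu
      obtain ⟨hu0, hu2⟩ := hu
      have hgu := h1 u ⟨hu0, by linarith⟩
      exact one_div_le_one_div_of_le (by linarith) hgu
    have hv1 : (∫ u in (0:ℝ)..(dx / 2), 1 / (dx - u)) = Real.log 2 := by
      have hcomp := intervalIntegral.integral_comp_sub_left (a := (0:ℝ)) (b := dx / 2)
        (fun v => 1 / v) dx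
      have hmem : (0:ℝ) ∉ Set.uIcc (dx - dx / 2) (dx - 0) := by
        rw [Set.uIcc_of_le (by linarith)]
        simp only [Set.mem_Icc]
        push_neg
        intro h'
        linarith
      rw [hcomp, integral_one_div hmem]
      have heq : (dx - 0) / (dx - dx / 2) = 2 := by
        rw [sub_zero, show dx - dx / 2 = dx / 2 by ring]
        rw [div_div_eq_mul_div, mul_comm, mul_div_assoc, div_self hdx.ne', mul_one]
      rw [heq]
    -- piece 2
    have hint2' : IntervalIntegrable (fun u => c * (1 / u)) volume (dx / 2) (L / 2) := by
      apply ContinuousOn.intervalIntegrable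
      apply ContinuousOn.mul continuousOn_const
      apply ContinuousOn.div continuousOn_const continuousOn_id
      intro u hu
      rw [Set.uIcc_of_le hdx2] at hu
      have := hu.1; simp only [id]; intro h; nlinarith
    have hp2 : (∫ u in (dx / 2)..(L / 2), 1 / g u)
        ≤ ∫ u in (dx / 2)..(L / 2), c * (1 / u) := by
      apply intervalIntegral.integral_mono_on hdx2 hint2 hint2'
      intro u hu
      obtain ⟨hu1, hu2⟩ := hu
      have hu0 : 0 < u := by linarith
      have hgu := h2 u ⟨by linarith, hu2⟩
      have hgpos' : 0 < g u := hgpos u ⟨by linarith, hu2⟩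
      rw [mul_one_div, div_le_div_iff₀ hgpos' hu0, one_mul]
      exact hgu
    have hv2 : (∫ u in (dx / 2)..(L / 2), c * (1 / u)) = c * Real.log (L / dx) := by
      rw [intervalIntegral.integral_const_mul]
      have hmem : (0:ℝ) ∉ Set.uIcc (dx / 2) (L / 2) := by
        rw [Set.uIcc_of_le hdx2]
        simp only [Set.mem_Icc]
        push_neg
        intro h'
        linarith
      rw [integral_one_div hmem]
      congr 1
      have heq : (L / 2) / (dx / 2) = L / dx := by
        rw [div_div_div_comm]
        norm_num
      rw [heq]
    rw [hv1] at hp1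
    rw [hv2] at hp2
    -- combine
    have hLdx1 : (1:ℝ) ≤ L / dx := (one_le_div hdx).2 hB.le
    have hlogL0 : 0 ≤ Real.log (L / dx) := Real.log_nonneg hLdx1
    have hlog2 : (0:ℝ) < Real.log 2 := Real.log_pos one_lt_two
    have hmul : Real.log 2 + Real.log (L / dx) = Real.log (2 * (L / dx)) :=
      (Real.log_mul two_ne_zero (by linarith)).symm
    have hstep : Real.log (2 * (L / dx)) ≤ Real.log (2 * c * (d / dx)) := by
      apply Real.log_le_log (by linarith)
      have h' : L / dx ≤ c * d / dx := by gcongr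
      rw [mul_div_assoc] at h'
      calc 2 * (L / dx) ≤ 2 * (c * (d / dx)) := by linarith
        _ = 2 * c * (d / dx) := by ring
    have hstep2 : Real.log (2 * c * (d / dx)) ≤ 2 * c * Real.log (1 + d / dx) :=
      my_log_le hc hddx
    have hfinal : Real.log 2 + c * Real.log (L / dx)
        ≤ c * (2 * c * Real.log (1 + d / m)) := by
      have k1 : Real.log 2 + c * Real.log (L / dx)
          ≤ c * (Real.log 2 + Real.log (L / dx)) := by
        have h' := mul_nonneg (sub_nonneg.2 hc) hlog2.le
        nlinarith [h']
      have k2 : Real.log 2 + Real.log (L / dx) ≤ 2 * c * Real.log (1 + d / m) := by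
        rw [hmul]
        calc Real.log (2 * (L / dx)) ≤ Real.log (2 * c * (d / dx)) := hstep
          _ ≤ 2 * c * Real.log (1 + d / dx) := hstep2
          _ ≤ 2 * c * Real.log (1 + d / m) := by
            have := mul_le_mul_of_nonneg_left hlogm (by linarith : (0:ℝ) ≤ 2 * c)
            linarith
      calc Real.log 2 + c * Real.log (L / dx) ≤ c * (Real.log 2 + Real.log (L / dx)) := k1
        _ ≤ c * (2 * c * Real.log (1 + d / m)) := mul_le_mul_of_nonneg_left k2 hc0.le
    have : (∫ u in (0:ℝ)..(L / 2), 1 / g u) ≤ Real.log 2 + c * Real.log (L / dx) := by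
      rw [← hsplit]; linarith
    have hre : c * (2 * c * Real.log (1 + d / m)) = 2 * c ^ 2 * Real.log (1 + d / m) := by
      ring
    linarith


variable {D : Type*} [MetricSpace D]

lemma my_dB_nonneg (x : D) : 0 ≤ dB x := Metric.infDist_nonneg

lemma my_dB_le (a b : D) : dB a ≤ dB b + dist a b := by
  have h := Metric.infDist_le_infDist_add_dist
    (x := (a : UniformSpace.Completion D)) (y := (b : UniformSpace.Completion D))
    (s := (Set.range ((↑) : D → UniformSpace.Completion D))ᶜ)
  simpa [dB, UniformSpace.Completion.dist_eq] using h

lemma my_continuous_dB : Continuous (dB : D → ℝ) :=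
  (Metric.continuous_infDist_pt _).comp (UniformSpace.Completion.continuous_coe D)

lemma my_qhLen_nonneg {x y : D} (cv : Curve D x y) : 0 ≤ cv.qhLen :=
  intervalIntegral.integral_nonneg cv.hL fun u _ => div_nonneg zero_le_one (my_dB_nonneg _)

lemma my_qhDist_le {x y : D} (cv : Curve D x y) : qhDist x y ≤ cv.qhLen := by
  apply csInf_le
  · refine ⟨0, ?_⟩
    rintro r ⟨c', rfl⟩
    exact my_qhLen_nonneg c'
  · exact ⟨cv, rfl⟩

lemma my_curve_dist {x y : D} (cv : Curve D x y) {s t : ℝ} (hs : s ∈ Set.Icc 0 cv.L)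
    (ht : t ∈ Set.Icc 0 cv.L) : dist (cv.γ s) (cv.γ t) ≤ |s - t| := by
  have h := cv.lip.dist_le_mul s hs t ht
  simpa [Real.dist_eq] using h

lemma my_not_II {f : ℝ → ℝ} {b : ℝ} (hb : 0 < b)
    (hf : ∀ u ∈ Set.Ioc 0 b, 1 / u ≤ f u) :
    ¬ IntervalIntegrable f volume 0 b := by
  intro h
  have hinv : IntervalIntegrable (fun u => u⁻¹) volume 0 b := by
    rw [intervalIntegrable_iff_integrableOn_Ioc_of_le hb.le] at h ⊢
    apply h.mono' measurable_inv.aestronglyMeasurable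
    filter_upwards [MeasureTheory.ae_restrict_mem measurableSet_Ioc] with u hu
    have h1 : 0 < u := hu.1
    have h2 := hf u hu
    rw [Real.norm_eq_abs, abs_of_nonneg (by positivity)]
    calc u⁻¹ = 1 / u := (one_div u).symm
      _ ≤ f u := h2
  rw [intervalIntegrable_inv_iff] at hinv
  rcases hinv with h' | h'
  · exact hb.ne h'
  · exact h' (Set.left_mem_uIcc)

end StmtAux

/-- in a `c`-uniform space,
`k_D(x,y) ≤ 4c²·log(1 + d(x,y)/min{d_D(x), d_D(y)})`. -/
theorem stmt8 {D : Type*} [MetricSpace D]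
    (hrc : RectConnected D) (hnc : ¬ CompleteSpace D)
    (c : ℝ) (hc : 1 ≤ c) (hu : IsUniform D c) (x y : D) :
    qhDist x y ≤ 4 * c ^ 2 * Real.log (1 + dist x y / min (dB x) (dB y)) := by
  obtain ⟨α, hαL, hαcone⟩ := hu x y
  have hc0 : (0:ℝ) < c := by linarith
  have hL0 : (0:ℝ) ≤ α.L := α.hL
  rcases eq_or_ne x y with rfl | hxy
  · -- trivial case x = y
    have hlip : LipschitzOnWith 1 (fun _ : ℝ => x) (Set.Icc 0 0) := by
      intro a _ b _
      simp
    have h1 := my_qhDist_le (⟨0, le_rfl, fun _ => x, hlip, rfl, rfl⟩ : Curve D x x)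
    have h2 : (⟨0, le_rfl, fun _ => x, hlip, rfl, rfl⟩ : Curve D x x).qhLen = 0 :=
      intervalIntegral.integral_same
    simp only [dist_self, zero_div, add_zero, Real.log_one, mul_zero]
    linarith
  · -- main case
    set d := dist x y with hddef
    set m := min (dB x) (dB y) with hmdef
    have hd : 0 < d := dist_pos.2 hxy
    have hdL : d ≤ α.L := by
      have h := my_curve_dist α (s := 0) (t := α.L) ⟨le_rfl, hL0⟩ ⟨hL0, le_rfl⟩
      rw [α.h0, α.h1] at h
      calc d ≤ |0 - α.L| := h
        _ = α.L := by rw [zero_sub, abs_neg, abs_of_nonneg hL0]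
    have hL0' : 0 < α.L := lt_of_lt_of_le hd hdL
    have hdB1 : ∀ u ∈ Set.Icc 0 α.L, dB x - u ≤ dB (α.γ u) := by
      intro u hu
      have h := my_dB_le (α.γ 0) (α.γ u)
      have h2 := my_curve_dist α (s := 0) (t := u) ⟨le_rfl, hL0⟩ hu
      rw [α.h0] at h
      have : |0 - u| = u := by rw [zero_sub, abs_neg, abs_of_nonneg hu.1]
      rw [α.h0] at h2
      rw [this] at h2
      linarith
    have hdB2 : ∀ u ∈ Set.Icc 0 α.L, dB y - (α.L - u) ≤ dB (α.γ u) := by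
      intro u hu
      have h := my_dB_le (α.γ α.L) (α.γ u)
      have h2 := my_curve_dist α (s := α.L) (t := u) ⟨hL0, le_rfl⟩ hu
      rw [α.h1] at h h2
      have : |α.L - u| = α.L - u := abs_of_nonneg (by linarith [hu.2])
      rw [this] at h2
      linarith
    have hm0 : 0 ≤ m := le_min (my_dB_nonneg x) (my_dB_nonneg y)
    rcases eq_or_lt_of_le hm0 with hm | hm
    · -- degenerate case : m = 0
      rw [← hm, div_zero, add_zero, Real.log_one, mul_zero]
      refine le_trans (my_qhDist_le α) (le_of_eq ?_)
      show α.qhLenOn 0 α.L = 0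
      apply intervalIntegral.integral_undef
      have hxy0 : dB x = 0 ∨ dB y = 0 := by
        rcases min_cases (dB x) (dB y) with ⟨h1, _⟩ | ⟨h1, _⟩
        · left; rw [← h1, ← hmdef]; exact hm.symm
        · right; rw [← h1, ← hmdef]; exact hm.symm
      rcases hxy0 with hbx | hby
      · intro hII
        have hsub : Set.uIcc (0:ℝ) (α.L / 2) ⊆ Set.uIcc 0 α.L := by
          rw [Set.uIcc_of_le (by linarith), Set.uIcc_of_le hL0]
          exact Set.Icc_subset_Icc le_rfl (by linarith)
        refine my_not_II (b := α.L / 2) (by linarith) ?_ (hII.mono_set hsub)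
        intro u hu
        have hu01 : u ∈ Set.Icc 0 α.L := ⟨hu.1.le, by linarith [hu.2]⟩
        have hcone := hαcone u hu01
        have hminu : min u (α.L - u) = u := min_eq_left (by linarith [hu.2])
        rw [hminu] at hcone
        have hpos : 0 < dB (α.γ u) := by nlinarith [hu.1]
        have hle : dB (α.γ u) ≤ u := by
          have h := my_dB_le (α.γ u) (α.γ 0)
          have h2 := my_curve_dist α (s := u) (t := 0) hu01 ⟨le_rfl, hL0⟩
          rw [α.h0] at h h2
          have : |u - 0| = u := by rw [sub_zero, abs_of_nonneg hu.1.le]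
          rw [this] at h2
          rw [hbx] at h
          linarith
        exact one_div_le_one_div_of_le hpos hle
      · intro hII
        have hsub : Set.uIcc (α.L / 2) α.L ⊆ Set.uIcc 0 α.L := by
          rw [Set.uIcc_of_le (by linarith), Set.uIcc_of_le hL0]
          exact Set.Icc_subset_Icc (by linarith) le_rfl
        have hII2 := (hII.mono_set hsub).comp_sub_left α.L
        have hII3 : IntervalIntegrable (fun v => 1 / dB (α.γ (α.L - v))) MeasureTheory.volume 0 (α.L / 2) := by
          have h : α.L - α.L = 0 := by ring
          have h' : α.L - α.L / 2 = α.L / 2 := by ring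
          rw [h, h'] at hII2
          exact hII2.symm
        refine my_not_II (b := α.L / 2) (by linarith) ?_ hII3
        intro v hv
        have hu01 : α.L - v ∈ Set.Icc 0 α.L := ⟨by linarith [hv.2], by linarith [hv.1]⟩
        have hcone := hαcone (α.L - v) hu01
        have hminv : min (α.L - v) (α.L - (α.L - v)) = v := by
          rw [show α.L - (α.L - v) = v by ring]
          exact min_eq_right (by linarith [hv.2])
        rw [hminv] at hcone
        have hpos : 0 < dB (α.γ (α.L - v)) := by nlinarith [hv.1]
        have hle : dB (α.γ (α.L - v)) ≤ v := by
          have h := my_dB_le (α.γ (α.L - v)) (α.γ α.L)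
          have h2 := my_curve_dist α (s := α.L - v) (t := α.L) hu01 ⟨hL0, le_rfl⟩
          rw [α.h1] at h h2
          have : |α.L - v - α.L| = v := by rw [show α.L - v - α.L = -v by ring, abs_neg,
            abs_of_nonneg hv.1.le]
          rw [this] at h2
          rw [hby] at h
          linarith
        exact one_div_le_one_div_of_le hpos hle
    · -- main case : m > 0
      have hbx : 0 < dB x := lt_of_lt_of_le hm (min_le_left _ _)
      have hby : 0 < dB y := lt_of_lt_of_le hm (min_le_right _ _)
      have hγcont : ContinuousOn (fun u => dB (α.γ u)) (Set.Icc 0 α.L) :=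
        my_continuous_dB.comp_continuousOn α.lip.continuousOn
      have hLcd : α.L ≤ c * d := hαL
      -- first half
      have key1 : ∫ u in (0:ℝ)..(α.L / 2), 1 / dB (α.γ u)
          ≤ 2 * c ^ 2 * Real.log (1 + d / m) := by
        apply my_half_bound hc hbx hm (min_le_left _ _) hd hdL hLcd
        · exact hγcont.mono (Set.Icc_subset_Icc le_rfl (by linarith))
        · intro u hu
          exact hdB1 u ⟨hu.1, by linarith [hu.2]⟩
        · intro u hu
          have hu01 : u ∈ Set.Icc 0 α.L := ⟨hu.1, by linarith [hu.2]⟩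
          have hcone := hαcone u hu01
          rw [min_eq_left (by linarith [hu.2])] at hcone
          exact hcone
      -- second half
      have key2 : ∫ v in (0:ℝ)..(α.L / 2), 1 / dB (α.γ (α.L - v))
          ≤ 2 * c ^ 2 * Real.log (1 + d / m) := by
        apply my_half_bound hc hby hm (min_le_right _ _) hd hdL hLcd
        · apply ContinuousOn.comp hγcont
            (continuousOn_const.sub continuousOn_id)
          intro v hv
          exact ⟨by simp only [Pi.sub_apply, id]; linarith [hv.2], by simp only [Pi.sub_apply, id]; linarith [hv.1]⟩
        · intro v hv
          have hu01 : α.L - v ∈ Set.Icc 0 α.L := ⟨by linarith [hv.2], by linarith [hv.1]⟩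
          have h := hdB2 (α.L - v) hu01
          rw [show α.L - (α.L - v) = v by ring] at h
          exact h
        · intro v hv
          have hu01 : α.L - v ∈ Set.Icc 0 α.L := ⟨by linarith [hv.2], by linarith [hv.1]⟩
          have hcone := hαcone (α.L - v) hu01
          rw [show α.L - (α.L - v) = v by ring] at hcone
          have hminv : min (α.L - v) v = v := min_eq_right (by linarith [hv.2])
          rw [hminv] at hcone
          exact hcone
      -- change of variables for the second half
      have hchange : (∫ u in (α.L / 2)..α.L, 1 / dB (α.γ u))
          = ∫ v in (0:ℝ)..(α.L / 2), 1 / dB (α.γ (α.L - v)) := by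
        have h := intervalIntegral.integral_comp_sub_left (a := (0:ℝ)) (b := α.L / 2)
          (fun u => 1 / dB (α.γ u)) α.L
        rw [show α.L - α.L / 2 = α.L / 2 by ring, sub_zero] at h
        exact h.symm
      -- positivity of dB ∘ γ on [0, L]
      have hpos : ∀ u ∈ Set.Icc 0 α.L, 0 < dB (α.γ u) := by
        intro u hu
        rcases eq_or_lt_of_le hu.1 with h0 | h0
        · rw [← h0, α.h0]; exact hbx
        · rcases eq_or_lt_of_le hu.2 with h1 | h1
          · rw [h1, α.h1]; exact hby
          · have hcone := hαcone u hu
            have hminpos : 0 < min u (α.L - u) := lt_min h0 (by linarith)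
            nlinarith
      have hfc : ContinuousOn (fun u => 1 / dB (α.γ u)) (Set.Icc 0 α.L) :=
        ContinuousOn.div continuousOn_const hγcont (fun u hu => (hpos u hu).ne')
      have hint : IntervalIntegrable (fun u => 1 / dB (α.γ u)) MeasureTheory.volume 0 α.L := by
        apply ContinuousOn.intervalIntegrable
        rwa [Set.uIcc_of_le hL0]
      have hint1 : IntervalIntegrable (fun u => 1 / dB (α.γ u)) MeasureTheory.volume 0 (α.L / 2) := by
        apply hint.mono_set
        rw [Set.uIcc_of_le (by linarith), Set.uIcc_of_le hL0]
        exact Set.Icc_subset_Icc le_rfl (by linarith)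
      have hint2 : IntervalIntegrable (fun u => 1 / dB (α.γ u)) MeasureTheory.volume (α.L / 2) α.L := by
        apply hint.mono_set
        rw [Set.uIcc_of_le (by linarith), Set.uIcc_of_le hL0]
        exact Set.Icc_subset_Icc (by linarith) le_rfl
      have hsplit := intervalIntegral.integral_add_adjacent_intervals hint1 hint2
      calc qhDist x y ≤ α.qhLen := my_qhDist_le α
        _ = (∫ u in (0:ℝ)..(α.L / 2), 1 / dB (α.γ u))
            + ∫ u in (α.L / 2)..α.L, 1 / dB (α.γ u) := by
            rw [Curve.qhLen, Curve.qhLenOn, ← hsplit]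
        _ ≤ 2 * c ^ 2 * Real.log (1 + d / m) + 2 * c ^ 2 * Real.log (1 + d / m) := by
            rw [hchange]
            exact add_le_add key1 key2
        _ = 4 * c ^ 2 * Real.log (1 + d / m) := by ring
end

section
/- Let D be a domain in a metric space that is c-quasiconvex (each pair of points joined by a curve of length at most c times their distance), satisfies the C_gh-Gehring-Hayman condition, is c₀-LLC, and satisfies the C_bs-ball separation condition. Suppose γ is a quasihyperbolic geodesic in D joining x and y, and z ∈ γ satisfies min{ℓ(γ[x,z]), ℓ(γ[z,y])} = Λ·d_D(z). Then Λ ≤ c·c₀·C_gh·C_bs. -/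
open Set Metric

/-- in a `c`-quasiconvex domain satisfying the `C_gh`-Gehring-Hayman
condition, the `c₀`-LLC condition, and the `C_bs`-ball separation condition, if `z`
on a quasihyperbolic geodesic `γ[x,y]` has `min{ℓ(γ[x,z]), ℓ(γ[z,y])} = Λ·d_D(z)`,
then `Λ ≤ c·c₀·C_gh·C_bs`. -/
theorem stmt13 {D : Type*} [MetricSpace D] (hnc : ¬ CompleteSpace D)
    (c c₀ Cgh Cbs Λ : ℝ) (hc : 1 ≤ c) (hc₀ : 1 ≤ c₀) (hCgh : 1 ≤ Cgh) (hCbs : 1 ≤ Cbs)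
    (hqc : ∀ x y : D, ∃ β : Curve D x y, β.L ≤ c * dist x y)
    (hGH : ∀ (x y : D) (γ : Curve D x y), γ.IsQHGeodesic →
      ∀ β : Curve D x y, γ.L ≤ Cgh * β.L)
    (hLLC1 : ∀ (z : D) (r : ℝ), 0 < r → ∀ x y : D,
      x ∈ Metric.ball z r → y ∈ Metric.ball z r →
      JoinedIn (Metric.ball z (c₀ * r)) x y)
    (hLLC2 : ∀ (z : D) (r : ℝ), 0 < r → ∀ x y : D,
      x ∉ Metric.ball z r → y ∉ Metric.ball z r →
      JoinedIn (Metric.ball z (r / c₀))ᶜ x y)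
    (hBS : ∀ (x y : D) (γ : Curve D x y), γ.IsQHGeodesic →
      ∀ t ∈ Set.Icc 0 γ.L, ∀ p : Path x y,
        ∃ s, p s ∈ Metric.ball (γ.γ t) (Cbs * dB (γ.γ t)))
    (x y : D) (γ : Curve D x y) (hγ : γ.IsQHGeodesic)
    (t : ℝ) (ht : t ∈ Set.Icc 0 γ.L)
    (hΛ : min t (γ.L - t) = Λ * dB (γ.γ t)) :
    Λ ≤ c * c₀ * Cgh * Cbs := by
  set z := γ.γ t with hz
  -- a path from x to y exists (via LLC₁)
  have hdxy : (0:ℝ) < dist x y + 1 := by positivity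
  have hjoin : JoinedIn (Metric.ball x (c₀ * (dist x y + 1))) x y := by
    refine hLLC1 x (dist x y + 1) hdxy x y (Metric.mem_ball_self hdxy) ?_
    exact Metric.mem_ball.mpr (by rw [dist_comm]; linarith)
  obtain ⟨p⟩ : Nonempty (Path x y) := ⟨hjoin.somePath⟩
  -- dB z > 0, via ball separation
  have hd : 0 < dB z := by
    by_contra hle
    push_neg at hle
    have hd0 : dB z = 0 :=
      le_antisymm hle (Metric.infDist_nonneg)
    obtain ⟨s, hs⟩ := hBS x y γ hγ t ht p
    rw [hd0, mul_zero] at hs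
    exact absurd (Metric.mem_ball.mp hs) (by simp [dist_nonneg.not_gt])
  -- the subcurve from x to z
  have h0t : (0:ℝ) ≤ t := ht.1
  have htL : t ≤ γ.L := ht.2
  set γ₁ : Curve D x z :=
    { L := t, hL := h0t, γ := γ.γ,
      lip := γ.lip.mono (Set.Icc_subset_Icc_right htL),
      h0 := γ.h0, h1 := rfl } with hγ₁
  have hγ₁geo : γ₁.IsQHGeodesic := by
    intro s u hsm hum hsu
    exact hγ s u ⟨hsm.1, hsm.2.trans htL⟩ ⟨hum.1, hum.2.trans htL⟩ hsu
  -- the subcurve from z to y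
  set γ₂ : Curve D z y :=
    { L := γ.L - t, hL := by linarith, γ := fun u => γ.γ (t + u),
      lip := by
        intro u hu v hv
        have h1 : t + u ∈ Set.Icc 0 γ.L := ⟨by linarith [hu.1], by linarith [hu.2]⟩
        have h2 : t + v ∈ Set.Icc 0 γ.L := ⟨by linarith [hv.1], by linarith [hv.2]⟩
        calc edist (γ.γ (t + u)) (γ.γ (t + v)) ≤ 1 * edist (t + u) (t + v) :=
              γ.lip h1 h2
          _ = 1 * edist u v := by
              rw [edist_dist, edist_dist, dist_add_left]
      h0 := by show γ.γ (t + 0) = z; rw [add_zero]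
      h1 := by show γ.γ (t + (γ.L - t)) = y; rw [add_sub_cancel]; exact γ.h1 } with hγ₂
  have hγ₂geo : γ₂.IsQHGeodesic := by
    intro s u hsm hum hsu
    have hs1 : 0 ≤ s := hsm.1
    have hs2 : s ≤ γ.L - t := hsm.2
    have hu1 : 0 ≤ u := hum.1
    have hu2 : u ≤ γ.L - t := hum.2
    have h1 : t + s ∈ Set.Icc 0 γ.L := ⟨by linarith, by linarith⟩
    have h2 : t + u ∈ Set.Icc 0 γ.L := ⟨by linarith, by linarith⟩
    have key := hγ (t + s) (t + u) h1 h2 (by linarith)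
    show (∫ v in s..u, 1 / dB (γ.γ (t + v))) = qhDist (γ.γ (t + s)) (γ.γ (t + u))
    rw [intervalIntegral.integral_comp_add_left (fun v => 1 / dB (γ.γ v)) t]
    exact key
  -- length bounds via Gehring–Hayman and quasiconvexity
  obtain ⟨β₁, hβ₁⟩ := hqc x z
  obtain ⟨β₂, hβ₂⟩ := hqc z y
  have hb1 : t ≤ Cgh * (c * dist x z) := by
    have := hGH x z γ₁ hγ₁geo β₁
    have hC : Cgh * β₁.L ≤ Cgh * (c * dist x z) := by
      apply mul_le_mul_of_nonneg_left hβ₁ (by linarith)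
    exact le_trans (by exact this) hC
  have hb2 : γ.L - t ≤ Cgh * (c * dist z y) := by
    have := hGH z y γ₂ hγ₂geo β₂
    have hC : Cgh * β₂.L ≤ Cgh * (c * dist z y) := by
      apply mul_le_mul_of_nonneg_left hβ₂ (by linarith)
    exact le_trans (by exact this) hC
  -- suppose Λ is too large
  by_contra hcon
  push_neg at hcon
  have hc' : (0:ℝ) < c := by linarith
  have hc₀' : (0:ℝ) < c₀ := by linarith
  have hCgh' : (0:ℝ) < Cgh := by linarith
  have hCbs' : (0:ℝ) < Cbs := by linarith
  have hprod : (0:ℝ) < c * c₀ * Cgh * Cbs := by positivity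
  have hΛpos : 0 < Λ := lt_trans hprod hcon
  set d := dB z with hdd
  set r : ℝ := Λ * d / (c * Cgh) with hr
  have hcC : 0 < c * Cgh := by nlinarith
  have hrpos : 0 < r := by positivity
  have hmin : Λ * d ≤ t := hΛ ▸ min_le_left _ _
  have hmin' : Λ * d ≤ γ.L - t := hΛ ▸ min_le_right _ _
  have hx' : x ∉ Metric.ball z r := by
    simp only [Metric.mem_ball, not_lt]
    rw [hr, div_le_iff₀ hcC]
    nlinarith
  have hy' : y ∉ Metric.ball z r := by
    simp only [Metric.mem_ball, not_lt]
    rw [hr, div_le_iff₀ hcC, dist_comm y z]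
    nlinarith
  obtain ⟨q, hq⟩ := hLLC2 z r hrpos x y hx' hy'
  obtain ⟨s, hs⟩ := hBS x y γ hγ t ht q
  have hball : Cbs * d < r / c₀ := by
    rw [hr, div_div, lt_div_iff₀ (by positivity)]
    nlinarith
  have : q s ∈ Metric.ball z (r / c₀) :=
    Metric.ball_subset_ball hball.le hs
  exact (hq s) this
end
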